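/- Let Λ_t be the qubit random unitary dynamics defined by Λ_t(σ_i) = λ_i(t) σ_i, Λ_t(1) = 1, and consider the mutual information I(φ⁺(t)) = 2 ln 2 + Σ_{k=0}^3 p_k(t) ln p_k(t) of the evolved maximally entangled state, where p_k(t) are the Bell-state eigenvalues. If p_k(t) is differentiable, p_0(t) ≥ p_k(t) for all k, and dp_k(t)/dt ≥ 0 for all k ∈ {1,2,3}, then dI(φ⁺(t))/dt ≤ 0 (no mutual-information backflow). -/

import Mathlib

open BigOperators

/-- For a Bell-diagonal evolved maximally entangled state with eigenvalues `p_k(t)`,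
the mutual information is `I(t) = 2 ln 2 + ∑_k p_k(t) ln p_k(t)`.  If the `p_k` are
differentiable at `t`, `p_0(t) ≥ p_k(t)` for all `k`, and `dp_k/dt ≥ 0` for all
`k ∈ {1,2,3}`, then `dI/dt ≤ 0`: no mutual-information backflow. -/
theorem no_mutual_information_backflow (p : ℝ → Fin 4 → ℝ) (t : ℝ)
    (hpos : ∀ s k, 0 ≤ p s k) (hsum : ∀ s, ∑ k, p s k = 1)
    (hdiff : ∀ k, DifferentiableAt ℝ (fun s => p s k) t)
    (hmax : ∀ k, p t k ≤ p t 0)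
    (hmono : ∀ k, k ≠ 0 → 0 ≤ deriv (fun s => p s k) t) :
    deriv (fun s => 2 * Real.log 2 + ∑ k, p s k * Real.log (p s k)) t ≤ 0 := by
  set D : Fin 4 → ℝ := fun k => deriv (fun s => p s k) t with hD
  -- If p t k = 0, then t is a global min of p · k, so D k = 0
  have hD0 : ∀ k, p t k = 0 → D k = 0 := by
    intro k hk
    have hmin : IsLocalMin (fun s => p s k) t :=
      Filter.Eventually.of_forall fun s => by simp only [hk]; exact hpos s k
    exact hmin.deriv_eq_zero
  -- sum of derivatives is zero
  have hsumD : ∑ k, D k = 0 := by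
    have h1 : HasDerivAt (fun s => ∑ k, p s k) (∑ k, D k) t :=
      HasDerivAt.fun_sum fun k _ => (hdiff k).hasDerivAt
    have h2 : (fun s => ∑ k, p s k) = fun _ => (1 : ℝ) := funext hsum
    rw [h2] at h1
    simpa using h1.deriv.symm
  set F : ℝ → ℝ := fun s => ∑ k, p s k * Real.log (p s k) with hF
  have hconst : deriv (fun s => 2 * Real.log 2 + ∑ k, p s k * Real.log (p s k)) t
      = deriv F t := by
    exact deriv_const_add _
  rw [hconst]
  by_cases hFd : DifferentiableAt ℝ F t
  · -- main case
    set S : Finset (Fin 4) := Finset.univ.filter (fun k => p t k ≠ 0) with hS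
    have hG : HasDerivAt (fun s => ∑ k ∈ S, p s k * Real.log (p s k))
        (∑ k ∈ S, (D k * Real.log (p t k) + D k)) t := by
      apply HasDerivAt.fun_sum
      intro k hk
      have hPk : p t k ≠ 0 := (Finset.mem_filter.mp hk).2
      have h1 : HasDerivAt (fun s => p s k) (D k) t := (hdiff k).hasDerivAt
      have h2 : HasDerivAt (fun s => Real.log (p s k)) ((p t k)⁻¹ * D k) t :=
        by have := (Real.hasDerivAt_log hPk).comp t h1; exact this
      have h3 := h1.fun_mul h2
      have h4 : p t k * ((p t k)⁻¹ * D k) = D k := by field_simp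
      simpa [h4] using h3
    set G : ℝ → ℝ := fun s => ∑ k ∈ S, p s k * Real.log (p s k) with hGdef
    -- the leftover part: sum over k with p t k = 0
    have hsplit : ∀ s, F s - G s = ∑ k ∈ Finset.univ.filter (fun k => ¬ p t k ≠ 0),
        p s k * Real.log (p s k) := by
      intro s
      have := Finset.sum_filter_add_sum_filter_not Finset.univ
        (fun k => p t k ≠ 0) (fun k => p s k * Real.log (p s k))
      simp only [hF, hGdef, hS]
      linarith [this]
    -- t is a local max of F - G (value 0, nearby values ≤ 0)
    have hzero : F t - G t = 0 := by
      rw [hsplit]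
      apply Finset.sum_eq_zero
      intro k hk
      have : p t k = 0 := not_not.mp (Finset.mem_filter.mp hk).2
      simp [this]
    have hloc : IsLocalMax (fun s => F s - G s) t := by
      have hev : ∀ᶠ s in nhds t, ∀ k ∈ Finset.univ.filter (fun k => ¬ p t k ≠ 0),
          p s k < 1 := by
        rw [Finset.eventually_all]
        intro k hk
        have hPk : p t k = 0 := not_not.mp (Finset.mem_filter.mp hk).2
        have hcont : ContinuousAt (fun s => p s k) t := (hdiff k).continuousAt
        have hlt : p t k < 1 := by rw [hPk]; norm_num
        exact hcont.eventually_lt continuousAt_const hlt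
      filter_upwards [hev] with s hs
      rw [hzero, hsplit]
      apply Finset.sum_nonpos
      intro k hk
      exact mul_nonpos_of_nonneg_of_nonpos (hpos s k)
        (Real.log_nonpos (hpos s k) (le_of_lt (hs k hk)))
    have hderivh : deriv (fun s => F s - G s) t = 0 := hloc.deriv_eq_zero
    have hGd : DifferentiableAt ℝ G t := hG.differentiableAt
    have hFeq : F = fun s => G s + (F s - G s) := by funext s; ring
    have hderivF : deriv F t = ∑ k ∈ S, (D k * Real.log (p t k) + D k) := by
      conv_lhs => rw [hFeq]
      rw [deriv_fun_add hGd (hFd.fun_sub hGd), hderivh, hG.deriv, add_zero]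
    rw [hderivF]
    -- extend sums to univ
    have e1 : ∑ k ∈ S, (D k * Real.log (p t k) + D k)
        = ∑ k, (D k * Real.log (p t k) + D k) := by
      apply Finset.sum_subset S.subset_univ
      intro k _ hk
      have hPk : p t k = 0 := by
        by_contra h
        exact hk (Finset.mem_filter.mpr ⟨Finset.mem_univ k, h⟩)
      simp [hD0 k hPk]
    rw [e1, Finset.sum_add_distrib, hsumD, add_zero]
    -- subtract (∑ D) * log p₀ = 0
    have e2 : ∑ k, D k * Real.log (p t k)
        = ∑ k, D k * (Real.log (p t k) - Real.log (p t 0)) := by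
      rw [Finset.sum_congr rfl (fun k _ => by ring :
        ∀ k ∈ Finset.univ, D k * (Real.log (p t k) - Real.log (p t 0))
          = D k * Real.log (p t k) - D k * Real.log (p t 0))]
      rw [Finset.sum_sub_distrib, ← Finset.sum_mul, hsumD, zero_mul, sub_zero]
    rw [show ∑ k, D k * Real.log (p t k)
        = ∑ k, D k * (Real.log (p t k) - Real.log (p t 0)) from e2]
    apply Finset.sum_nonpos
    intro k _
    by_cases hk0 : k = 0
    · subst hk0; simp
    by_cases hPk : p t k = 0
    · rw [hD0 k hPk]; ring_nf; simp
    · have h1 : 0 ≤ D k := hmono k hk0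
      have h2 : Real.log (p t k) ≤ Real.log (p t 0) :=
        Real.log_le_log (lt_of_le_of_ne (hpos t k) (Ne.symm hPk)) (hmax k)
      nlinarith
  · rw [deriv_zero_of_not_differentiableAt hFd]
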